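/- Intermediate destination well-definedness: for i < w < m^ℓ, let j be the largest base-m digit position in which i and w differ, and define x(i,w) = ⌊w/m^j⌋·m^j. Then i < x(i,w) ≤ w, and if x(i,w) < w then the largest digit position in which x(i,w) and w differ is strictly less than j. -/

import Mathlib

/-- The `j`-th base-`m` digit of `i`. -/
def digit (m j i : ℕ) : ℕ := (i / m ^ j) % m

/-- The largest base-`m` digit position (below `ℓ`) in which `i` and `w` differ. -/
def topDiff (m ℓ i w : ℕ) : ℕ :=
  Nat.findGreatest (fun j => digit m j i ≠ digit m j w) ℓ

/-- The intermediate destination `x(i, w) = ⌊w / m^{j(i,w)}⌋ · m^{j(i,w)}`. -/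
def interDest (m ℓ i w : ℕ) : ℕ :=
  (w / m ^ topDiff m ℓ i w) * m ^ topDiff m ℓ i w

lemma quot_eq (m ℓ a b : ℕ) (hm : 2 ≤ m) (ha : a < m ^ ℓ) (hb : b < m ^ ℓ) :
    ∀ k, (∀ k', k ≤ k' → digit m k' a = digit m k' b) → a / m ^ k = b / m ^ k := by
  suffices h : ∀ n k, ℓ - k = n → (∀ k', k ≤ k' → digit m k' a = digit m k' b) →
      a / m ^ k = b / m ^ k by
    exact fun k => h (ℓ - k) k rfl
  intro n
  induction n with
  | zero =>
    intro k hd _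
    have hk : ℓ ≤ k := Nat.le_of_sub_eq_zero hd
    have h1 : a / m ^ k = 0 :=
      Nat.div_eq_of_lt (lt_of_lt_of_le ha (Nat.pow_le_pow_right (by omega) hk))
    have h2 : b / m ^ k = 0 :=
      Nat.div_eq_of_lt (lt_of_lt_of_le hb (Nat.pow_le_pow_right (by omega) hk))
    rw [h1, h2]
  | succ n ih =>
    intro k hd h
    have hk1 : ℓ - (k + 1) = n := by omega
    have ihk := ih (k + 1) hk1 (fun k' hk' => h k' (by omega))
    have ha' : a / m ^ k = (a / m ^ (k + 1)) * m + digit m k a := by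
      have h1 : a / m ^ (k + 1) = a / m ^ k / m := by
        rw [Nat.div_div_eq_div_mul, pow_succ]
      rw [h1, digit]
      exact (Nat.div_add_mod' _ _).symm
    have hb' : b / m ^ k = (b / m ^ (k + 1)) * m + digit m k b := by
      have h1 : b / m ^ (k + 1) = b / m ^ k / m := by
        rw [Nat.div_div_eq_div_mul, pow_succ]
      rw [h1, digit]
      exact (Nat.div_add_mod' _ _).symm
    rw [ha', hb', ihk, h k le_rfl]

theorem interDest_wellDefined (m ℓ i w : ℕ) (hm : 2 ≤ m) (hℓ : 1 ≤ ℓ)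
    (hiw : i < w) (hw : w < m ^ ℓ) :
    i < interDest m ℓ i w ∧ interDest m ℓ i w ≤ w ∧
      (interDest m ℓ i w ≠ w →
        topDiff m ℓ (interDest m ℓ i w) w < topDiff m ℓ i w) := by
  have hi : i < m ^ ℓ := lt_trans hiw hw
  set j := topDiff m ℓ i w with hjdef
  have hmpos : 0 < m := by omega
  have hpowpos : ∀ k : ℕ, 0 < m ^ k := fun k => pow_pos hmpos k
  -- digits above ℓ are equal (both zero)
  have hhigh : ∀ a : ℕ, a < m ^ ℓ → ∀ k, ℓ ≤ k → digit m k a = 0 := by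
    intro a ha k hk
    have : a / m ^ k = 0 :=
      Nat.div_eq_of_lt (lt_of_lt_of_le ha (Nat.pow_le_pow_right (by omega) hk))
    simp [digit, this]
  -- there exists a differing digit position ≤ ℓ
  have hex : ∃ k, k ≤ ℓ ∧ digit m k i ≠ digit m k w := by
    by_contra hcon
    push_neg at hcon
    have hall : ∀ k', 0 ≤ k' → digit m k' i = digit m k' w := by
      intro k' _
      rcases le_or_gt k' ℓ with h | h
      · exact hcon k' h
      · rw [hhigh i hi k' (le_of_lt h), hhigh w hw k' (le_of_lt h)]
    have := quot_eq m ℓ i w hm hi hw 0 hall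
    simp at this
    omega
  obtain ⟨k0, hk0, hk0d⟩ := hex
  have hPj : digit m j i ≠ digit m j w :=
    Nat.findGreatest_spec (P := fun j => digit m j i ≠ digit m j w) hk0 hk0d
  -- quotients above j agree
  have hq : i / m ^ (j + 1) = w / m ^ (j + 1) := by
    apply quot_eq m ℓ i w hm hi hw
    intro k' hk'
    rcases le_or_gt k' ℓ with h | h
    · by_contra hne
      exact Nat.findGreatest_is_greatest (P := fun j => digit m j i ≠ digit m j w)
        (show topDiff m ℓ i w < k' by omega) h hne
    · rw [hhigh i hi k' (le_of_lt h), hhigh w hw k' (le_of_lt h)]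
  -- i / m^j < w / m^j
  have hdiv : i / m ^ j < w / m ^ j := by
    have hle : i / m ^ j ≤ w / m ^ j := Nat.div_le_div_right (le_of_lt hiw)
    have hne : i / m ^ j ≠ w / m ^ j := by
      intro he
      exact hPj (by rw [digit, digit, he])
    omega
  have hx1 : i < interDest m ℓ i w := by
    have h1 : i < (i / m ^ j + 1) * m ^ j := by
      rw [add_mul, one_mul]
      exact Nat.lt_div_mul_add (hpowpos j)
    have h2 : (i / m ^ j + 1) * m ^ j ≤ (w / m ^ j) * m ^ j :=
      Nat.mul_le_mul_right _ (by omega)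
    calc i < (i / m ^ j + 1) * m ^ j := h1
    _ ≤ (w / m ^ j) * m ^ j := h2
    _ = interDest m ℓ i w := rfl
  have hx2 : interDest m ℓ i w ≤ w := Nat.div_mul_le_self _ _
  refine ⟨hx1, hx2, ?_⟩
  intro hne
  set x := interDest m ℓ i w with hxdef
  -- j ≥ 1
  have hj1 : 1 ≤ j := by
    by_contra h
    have hj0 : j = 0 := by omega
    apply hne
    show (w / m ^ j) * m ^ j = w
    rw [hj0]; simp
  -- x / m^j = w / m^j
  have hxq : x / m ^ j = w / m ^ j := by
    show (w / m ^ j) * m ^ j / m ^ j = w / m ^ j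
    exact Nat.mul_div_cancel _ (hpowpos j)
  -- digits of x and w agree at positions ≥ j
  have hagree : ∀ k, j ≤ k → digit m k x = digit m k w := by
    intro k hk
    have hkk : m ^ k = m ^ j * m ^ (k - j) := by
      rw [← pow_add]; congr 1; omega
    rw [digit, digit, hkk, ← Nat.div_div_eq_div_mul, ← Nat.div_div_eq_div_mul, hxq]
  by_contra hcon
  push_neg at hcon
  have hj'pos : topDiff m ℓ x w ≠ 0 := by omega
  have := Nat.findGreatest_of_ne_zero
    (P := fun k => digit m k x ≠ digit m k w) rfl hj'pos
  exact this (hagree _ hcon)
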